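/- arXiv:2411.16911 — 5 statements merged into one kernel-verified Lean document; each statement's English description precedes it below -/
import Mathlib

section
/- Let v, α, r > 0 and p_i, p_j ∈ ℝ² with p_i ≠ p_j and h := ‖p_i − p_j‖² − r² ≥ 0. Let β ∈ ℝ satisfy (p_j − p_i)/‖p_j − p_i‖ = (cos β, sin β), let φ ∈ ℝ, set ũ := v·(cos φ, sin φ) and Δ := arccos(min(1, α·h/(4·v·‖p_i − p_j‖))). Define θ* by: θ* = β − Δ if ∠(φ − β) ∈ (−Δ, 0); θ* = β + Δ if ∠(φ − β) ∈ [0, Δ) (when ∠(φ − β) = 0 the choice θ* = β − Δ is also valid); and θ* = φ if |∠(φ − β)| ≥ Δ. Then u* := v·(cos θ*, sin θ*) is a global minimizer of the function u ↦ ½‖u − ũ‖² over the set {u ∈ ℝ² : ‖u‖ = v and (α/2)·h + 2⟨p_i − p_j, u⟩ ≥ 0}. -/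
open Real

/-- Angular normalization: maps `a` to the unique value in `[-π, π)` congruent to `a` mod `2π`. -/
noncomputable def angNorm (a : ℝ) : ℝ :=
  2 * π * Int.fract ((a + π) / (2 * π)) - π

/-- The vector `(a, b)` in the Euclidean plane. -/
noncomputable def vec2 (a b : ℝ) : EuclideanSpace ℝ (Fin 2) := WithLp.toLp 2 ![a, b]

/-- 2D cross product `a × b = a₁·b₂ − a₂·b₁`. -/
noncomputable def cross2 (a b : EuclideanSpace ℝ (Fin 2)) : ℝ := a 0 * b 1 - a 1 * b 0


lemma vec2_smul (c a b : ℝ) : c • vec2 a b = vec2 (c*a) (c*b) := by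
  ext i; fin_cases i <;> simp [vec2]

lemma vec2_sub (a b c d : ℝ) : vec2 a b - vec2 c d = vec2 (a-c) (b-d) := by
  ext i; fin_cases i <;> simp [vec2]

lemma norm_vec2 (a b : ℝ) : ‖vec2 a b‖ = Real.sqrt (a^2 + b^2) := by
  simp [EuclideanSpace.norm_eq, vec2, Fin.sum_univ_two, sq_abs]

lemma inner_vec2 (a b c d : ℝ) :
    (inner ℝ (vec2 a b) (vec2 c d) : ℝ) = a*c + b*d := by
  simp [vec2, PiLp.inner_apply, Fin.sum_univ_two] <;> ring

lemma exists_angle (v : ℝ) (hv : 0 < v) (u : EuclideanSpace ℝ (Fin 2)) (hu : ‖u‖ = v) :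
    ∃ θ : ℝ, u = v • vec2 (Real.cos θ) (Real.sin θ) := by
  have hsum : Real.sqrt ((u 0)^2 + (u 1)^2) = v := by
    rw [← hu]; rw [EuclideanSpace.norm_eq]
    simp [Fin.sum_univ_two, sq_abs]
  have hsq : (u 0)^2 + (u 1)^2 = v^2 := by
    have := congrArg (·^2) hsum
    simpa [Real.sq_sqrt (by positivity : (0:ℝ) ≤ (u 0)^2 + (u 1)^2)] using this
  set z : ℂ := ⟨u 0, u 1⟩ with hz
  have habs : ‖z‖ = v := by
    rw [Complex.norm_def, Complex.normSq_mk]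
    rw [show u 0 * u 0 + u 1 * u 1 = v^2 by nlinarith]
    exact Real.sqrt_sq hv.le
  have hz0 : z ≠ 0 := by
    intro hzz; rw [hzz] at habs; simp at habs; exact hv.ne' habs.symm
  refine ⟨Complex.arg z, ?_⟩
  have hc : Real.cos (Complex.arg z) = u 0 / v := by
    rw [Complex.cos_arg hz0, habs]
  have hs : Real.sin (Complex.arg z) = u 1 / v := by
    rw [Complex.sin_arg, habs]
  ext i; fin_cases i <;>
    simp [vec2, hc, hs] <;> field_simp

lemma key_cos (Δ ψ t : ℝ) (hΔ : Δ ≤ π/2) (hψ0 : 0 ≤ ψ) (hψΔ : ψ ≤ Δ)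
    (ht : Real.cos t ≤ Real.cos Δ) : Real.cos (t - ψ) ≤ Real.cos (Δ - ψ) := by
  have hπ := Real.pi_pos
  have hΔ0 : 0 ≤ Δ := le_trans hψ0 hψΔ
  -- normalize t
  set k : ℤ := ⌊(t + π) / (2 * π)⌋ with hk
  set t' : ℝ := t - 2 * π * k with ht'
  have hcos_t : Real.cos t' = Real.cos t := by
    rw [ht', show 2 * π * (k:ℝ) = (k:ℝ) * (2*π) by ring, Real.cos_sub_int_mul_two_pi]
  have hmem : -π ≤ t' ∧ t' < π := by
    have h1 : (k:ℝ) ≤ (t + π) / (2 * π) := Int.floor_le _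
    have h2 : (t + π) / (2 * π) < k + 1 := Int.lt_floor_add_one _
    have h2π : (0:ℝ) < 2*π := by positivity
    have h1' : (k:ℝ) * (2*π) ≤ t + π := by
      have := (le_div_iff₀ h2π).1 h1; linarith
    have h2' : t + π < ((k:ℝ)+1) * (2*π) := by
      have := (div_lt_iff₀ h2π).1 h2; linarith
    constructor <;> [nlinarith; nlinarith]
  have hcost' : Real.cos t' ≤ Real.cos Δ := hcos_t ▸ ht
  have habs : Δ ≤ |t'| := by
    by_contra hlt
    push_neg at hlt
    have := Real.cos_lt_cos_of_nonneg_of_le_pi (abs_nonneg t') (by linarith) hlt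
    rw [Real.cos_abs] at this; linarith
  have hgoal : Real.cos (t' - ψ) ≤ Real.cos (Δ - ψ) := by
    rcases le_or_gt 0 t' with hpos | hneg
    · -- t' ∈ [Δ, π)
      have h1 : Δ ≤ t' := by rwa [abs_of_nonneg hpos] at habs
      exact Real.cos_le_cos_of_nonneg_of_le_pi (by linarith) (by linarith) (by linarith)
    · have h1 : Δ ≤ -t' := by rwa [abs_of_neg hneg] at habs
      have hcs : Real.cos (t' - ψ) = Real.cos (ψ - t') := by
        rw [← Real.cos_neg (t' - ψ)]; ring_nf
      rw [hcs]
      rcases le_or_gt (ψ - t') π with hle | hgt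
      · calc Real.cos (ψ - t') ≤ Real.cos (Δ + ψ) :=
              Real.cos_le_cos_of_nonneg_of_le_pi (by linarith) hle (by linarith)
          _ ≤ Real.cos (Δ - ψ) :=
              Real.cos_le_cos_of_nonneg_of_le_pi (by linarith) (by linarith) (by linarith)
      · have hcs2 : Real.cos (ψ - t') = Real.cos (2*π - (ψ - t')) := by
          rw [← Real.cos_neg (2*π - (ψ - t')), ← Real.cos_add_two_pi (-(2*π - (ψ - t')))]
          ring_nf
        rw [hcs2]
        exact Real.cos_le_cos_of_nonneg_of_le_pi (by linarith) (by linarith) (by nlinarith)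
  calc Real.cos (t - ψ) = Real.cos (t' - ψ) := by
        rw [ht', show t - 2*π*(k:ℝ) - ψ = (t - ψ) - (k:ℝ)*(2*π) by ring,
          Real.cos_sub_int_mul_two_pi]
      _ ≤ Real.cos (Δ - ψ) := hgoal

lemma angNorm_spec (a : ℝ) : ∃ k : ℤ, a = angNorm a + 2*π*k ∧ -π ≤ angNorm a ∧ angNorm a < π := by
  have hπ := Real.pi_pos
  refine ⟨⌊(a + π) / (2 * π)⌋, ?_, ?_, ?_⟩
  · unfold angNorm Int.fract; field_simp; ring
  · have := Int.fract_nonneg ((a + π) / (2 * π)); unfold angNorm; nlinarith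
  · have := Int.fract_lt_one ((a + π) / (2 * π)); unfold angNorm; nlinarith

lemma obj_formula (v θ φ : ℝ) :
    ‖(v • vec2 (Real.cos θ) (Real.sin θ) : EuclideanSpace ℝ (Fin 2)) -
      v • vec2 (Real.cos φ) (Real.sin φ)‖ ^ 2 = v^2 * (2 - 2 * Real.cos (θ - φ)) := by
  rw [vec2_smul, vec2_smul, vec2_sub, norm_vec2, Real.sq_sqrt (by positivity), Real.cos_sub]
  nlinarith [Real.sin_sq_add_cos_sq θ, Real.sin_sq_add_cos_sq φ]


set_option maxHeartbeats 2000000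

/-- Theorem 1 of the paper: explicit solution of the CBF-based safety
filter. The corrected heading `θs` yields a global minimizer of `u ↦ ½‖u − ũ‖²` over the
set of constant-speed inputs satisfying the decentralized CBF condition. -/
theorem explicit_solution_of_safety_filter
    (v α r : ℝ) (hv : 0 < v) (hα : 0 < α) (hr : 0 < r)
    (p q : EuclideanSpace ℝ (Fin 2)) (hpq : p ≠ q)
    (h : ℝ) (hh : h = ‖p - q‖ ^ 2 - r ^ 2) (hh0 : 0 ≤ h)
    (β : ℝ) (hβ : (‖q - p‖)⁻¹ • (q - p) = vec2 (cos β) (sin β))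
    (φ : ℝ) (utilde : EuclideanSpace ℝ (Fin 2)) (hut : utilde = v • vec2 (cos φ) (sin φ))
    (Δ : ℝ) (hΔ : Δ = arccos (min 1 (α * h / (4 * v * ‖p - q‖))))
    (θs : ℝ)
    (hθs : (angNorm (φ - β) ∈ Set.Ioo (-Δ) 0 ∧ θs = β - Δ)
        ∨ (angNorm (φ - β) ∈ Set.Ico 0 Δ ∧ θs = β + Δ)
        ∨ (angNorm (φ - β) = 0 ∧ θs = β - Δ)
        ∨ (Δ ≤ |angNorm (φ - β)| ∧ θs = φ)) :
    (v • vec2 (cos θs) (sin θs)) ∈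
        {u : EuclideanSpace ℝ (Fin 2) | ‖u‖ = v ∧ 0 ≤ α / 2 * h + 2 * (inner ℝ (p - q) u : ℝ)} ∧
      ∀ u ∈ {u : EuclideanSpace ℝ (Fin 2) | ‖u‖ = v ∧ 0 ≤ α / 2 * h + 2 * (inner ℝ (p - q) u : ℝ)},
        (1 / 2) * ‖v • vec2 (cos θs) (sin θs) - utilde‖ ^ 2 ≤ (1 / 2) * ‖u - utilde‖ ^ 2 := by
  have hπ := Real.pi_pos
  set ρ : ℝ := ‖p - q‖ with hρdef
  have hρ : 0 < ρ := norm_pos_iff.2 (sub_ne_zero.2 hpq)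
  have hqp : ‖q - p‖ = ρ := by rw [hρdef, norm_sub_rev]
  have hqpe : q - p = ρ • vec2 (Real.cos β) (Real.sin β) := by
    rw [← hβ, hqp, smul_smul, mul_inv_cancel₀ hρ.ne', one_smul]
  have hpqe : p - q = (-ρ) • vec2 (Real.cos β) (Real.sin β) := by
    rw [neg_smul, ← hqpe, neg_sub]
  have hnorm : ∀ θ : ℝ, ‖(v • vec2 (Real.cos θ) (Real.sin θ) : EuclideanSpace ℝ (Fin 2))‖ = v := by
    intro θ
    rw [norm_smul, norm_vec2, Real.norm_eq_abs, abs_of_pos hv,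
      show Real.cos θ ^ 2 + Real.sin θ ^ 2 = 1 by
        have := Real.sin_sq_add_cos_sq θ; linarith]
    simp
  have hinner : ∀ θ : ℝ,
      (inner ℝ (p - q) (v • vec2 (Real.cos θ) (Real.sin θ)) : ℝ) = -(ρ * v * Real.cos (θ - β)) := by
    intro θ
    rw [hpqe, real_inner_smul_left, real_inner_smul_right, inner_vec2, Real.cos_sub]
    ring
  set c : ℝ := α * h / (4 * v * ρ) with hc
  have hc0 : 0 ≤ c := by positivity
  have hmle1 : min 1 c ≤ 1 := min_le_left _ _
  have hm0 : 0 ≤ min 1 c := le_min one_pos.le hc0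
  have hcosΔ : Real.cos Δ = min 1 c := by
    rw [hΔ, Real.cos_arccos (by linarith) hmle1]
  have hΔ0 : 0 ≤ Δ := hΔ ▸ Real.arccos_nonneg _
  have hΔhalf : Δ ≤ π/2 := hΔ ▸ (Real.arccos_le_pi_div_two.2 hm0)
  have hconstr : ∀ θ : ℝ,
      (0 ≤ α / 2 * h + 2 * (inner ℝ (p - q) (v • vec2 (Real.cos θ) (Real.sin θ)) : ℝ)) ↔
        Real.cos (θ - β) ≤ Real.cos Δ := by
    intro θ
    rw [hinner θ]
    have h4 : (0:ℝ) < 4 * v * ρ := by positivity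
    constructor
    · intro hx
      refine hcosΔ ▸ le_min (Real.cos_le_one _) ?_
      rw [hc, le_div_iff₀ h4]; nlinarith
    · intro hx
      have h1 : Real.cos (θ - β) ≤ c := hx.trans (hcosΔ ▸ min_le_right 1 c)
      rw [hc, le_div_iff₀ h4] at h1; nlinarith
  obtain ⟨k, hψk, hψlo, hψhi⟩ := angNorm_spec (φ - β)
  set ψ : ℝ := angNorm (φ - β) with hψ
  have hshift : ∀ x : ℝ, Real.cos (x - (φ - β)) = Real.cos (x - ψ) := by
    intro x
    rw [hψk, show x - (ψ + 2*π*(k:ℝ)) = (x - ψ) - (k:ℝ)*(2*π) by ring,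
      Real.cos_sub_int_mul_two_pi]
  have hcosφβ : Real.cos (φ - β) = Real.cos ψ := by
    rw [hψk, show ψ + 2*π*(k:ℝ) = ψ - ((-k : ℤ):ℝ)*(2*π) by push_cast; ring,
      Real.cos_sub_int_mul_two_pi]
  have habsψ : |ψ| ≤ π := abs_le.2 ⟨hψlo, hψhi.le⟩
  -- feasibility
  have hfeas : Real.cos (θs - β) ≤ Real.cos Δ := by
    rcases hθs with ⟨_, hts⟩ | ⟨_, hts⟩ | ⟨_, hts⟩ | ⟨hm, hts⟩
    · rw [hts, show β - Δ - β = -Δ by ring, Real.cos_neg]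
    · rw [hts, show β + Δ - β = Δ by ring]
    · rw [hts, show β - Δ - β = -Δ by ring, Real.cos_neg]
    · rw [hts, hcosφβ, ← Real.cos_abs]
      exact Real.cos_le_cos_of_nonneg_of_le_pi hΔ0 habsψ hm
  -- optimality in angle form
  have hopt : ∀ τ : ℝ, Real.cos (τ - β) ≤ Real.cos Δ →
      Real.cos (τ - φ) ≤ Real.cos (θs - φ) := by
    intro τ hτ
    have hτφ : Real.cos (τ - φ) = Real.cos ((τ - β) - ψ) := by
      rw [show τ - φ = (τ - β) - (φ - β) by ring, hshift]
    rcases hθs with ⟨hm, hts⟩ | ⟨hm, hts⟩ | ⟨hm, hts⟩ | ⟨hm, hts⟩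
    · -- ψ ∈ (-Δ, 0), θs = β - Δ
      obtain ⟨hm1, hm2⟩ := hm
      rw [hτφ, hts, show β - Δ - φ = -((Δ + (φ - β))) by ring, Real.cos_neg,
        show Δ + (φ - β) = Δ + (φ - β) by rfl]
      have : Real.cos (Δ + (φ - β)) = Real.cos (Δ - (-ψ)) := by
        rw [show Δ + (φ - β) = Δ - (-(φ - β)) by ring,
          show Δ - (-(φ-β)) = (Δ + (φ - β)) by ring]
        rw [hψk]
        rw [show Δ + (ψ + 2*π*(k:ℝ)) = (Δ - (-ψ)) - ((-k : ℤ):ℝ)*(2*π) by push_cast; ring,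
          Real.cos_sub_int_mul_two_pi]
      rw [this]
      have hcτ : Real.cos ((τ - β) - ψ) = Real.cos ((-(τ - β)) - (-ψ)) := by
        rw [← Real.cos_neg ((τ - β) - ψ)]; ring_nf
      rw [hcτ]
      exact key_cos Δ (-ψ) (-(τ - β)) hΔhalf (by linarith [hm2.le]) (by linarith)
        (by rwa [Real.cos_neg])
    · -- ψ ∈ [0, Δ), θs = β + Δ
      obtain ⟨hm1, hm2⟩ := hm
      rw [hτφ, hts, show β + Δ - φ = Δ - (φ - β) by ring, hshift]
      exact key_cos Δ ψ (τ - β) hΔhalf hm1 hm2.le hτ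
    · -- ψ = 0, θs = β - Δ
      rw [hτφ, hts, show β - Δ - φ = -(Δ + (φ - β)) by ring, Real.cos_neg]
      have heq : Real.cos (Δ + (φ - β)) = Real.cos (Δ - (-ψ)) := by
        rw [hψk, show Δ + (ψ + 2*π*(k:ℝ)) = (Δ - (-ψ)) - ((-k : ℤ):ℝ)*(2*π) by push_cast; ring,
          Real.cos_sub_int_mul_two_pi]
      rw [heq]
      have hcτ : Real.cos ((τ - β) - ψ) = Real.cos ((-(τ - β)) - (-ψ)) := by
        rw [← Real.cos_neg ((τ - β) - ψ)]; ring_nf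
      rw [hcτ]
      exact key_cos Δ (-ψ) (-(τ - β)) hΔhalf (by rw [hm]; norm_num) (by rw [hm]; simpa using hΔ0)
        (by rwa [Real.cos_neg])
    · -- θs = φ
      rw [hts]
      simp only [sub_self, Real.cos_zero]
      exact Real.cos_le_one _
  refine ⟨⟨hnorm θs, (hconstr θs).2 hfeas⟩, ?_⟩
  rintro u ⟨hu1, hu2⟩
  obtain ⟨τ, rfl⟩ := exists_angle v hv u hu1
  have hτ : Real.cos (τ - β) ≤ Real.cos Δ := (hconstr τ).1 hu2
  have hcmp := hopt τ hτ
  rw [hut, obj_formula, obj_formula]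
  nlinarith [sq_nonneg v]
end

section
/- Let Δ ∈ [0, π/2], s ∈ {−1, 1}, and β, φ ∈ ℝ with s·∠(φ − β) ∈ [0, Δ). Then cos((β + sΔ) − β) ≤ cos Δ (so θ = β + sΔ is feasible), and for every θ ∈ ℝ with cos(θ − β) ≤ cos Δ one has cos(θ − φ) ≤ cos((β + sΔ) − φ); that is, θ = β + sΔ maximizes cos(θ − φ) over the feasible set {θ : cos(θ − β) ≤ cos Δ}. -/
open Real

lemma angNorm_eq (a : ℝ) : ∃ k : ℤ, angNorm a = a + (k : ℝ) * (2 * π) := by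
  refine ⟨-⌊(a + π) / (2 * π)⌋, ?_⟩
  have hπ := Real.pi_pos
  have h2π : (2 * π) ≠ 0 := by positivity
  unfold angNorm
  rw [Int.fract]
  push_cast
  field_simp
  ring

lemma angNorm_mem (a : ℝ) : angNorm a ∈ Set.Ico (-π) π := by
  have hπ := Real.pi_pos
  have h1 : (0:ℝ) ≤ Int.fract ((a + π) / (2 * π)) := Int.fract_nonneg _
  have h2 : Int.fract ((a + π) / (2 * π)) < 1 := Int.fract_lt_one _
  constructor <;> unfold angNorm <;> nlinarith

lemma cos_angNorm (a : ℝ) : Real.cos (angNorm a) = Real.cos a := by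
  obtain ⟨k, hk⟩ := angNorm_eq a
  rw [hk, Real.cos_add_int_mul_two_pi]

lemma cos_sgn_mul (s x : ℝ) (hs : s = -1 ∨ s = 1) : Real.cos (s * x) = Real.cos x := by
  rcases hs with h | h <;> rw [h] <;> simp

/-- when the cruising angle `φ` lies in the unsafe cone on side `s` of the
bearing angle `β`, the heading `β + sΔ` is feasible and maximizes `cos (θ − φ)` over the
feasible set `{θ : cos (θ − β) ≤ cos Δ}`. -/
theorem boundary_heading_is_optimal
    (Δ : ℝ) (hΔ : Δ ∈ Set.Icc 0 (π / 2)) (s : ℝ) (hs : s = -1 ∨ s = 1)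
    (β φ : ℝ) (hφ : s * angNorm (φ - β) ∈ Set.Ico 0 Δ) :
    cos ((β + s * Δ) - β) ≤ cos Δ ∧
      ∀ θ : ℝ, cos (θ - β) ≤ cos Δ → cos (θ - φ) ≤ cos ((β + s * Δ) - φ) := by
  obtain ⟨hΔ0, hΔπ⟩ := hΔ
  obtain ⟨hψ0, hψΔ⟩ := hφ
  have hπ := Real.pi_pos
  have hs2 : s * s = 1 := by rcases hs with h | h <;> rw [h] <;> ring
  set ψ := angNorm (φ - β) with hψdef
  obtain ⟨m, hm⟩ := angNorm_eq (φ - β)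
  have hψ_mem := angNorm_mem (φ - β)
  rw [← hψdef] at hm hψ_mem
  have habsψ : |ψ| = s * ψ := by
    rcases hs with h | h
    · rw [h] at hψ0 ⊢
      rw [abs_of_nonpos (by linarith)]; ring
    · rw [h] at hψ0 ⊢
      rw [abs_of_nonneg (by linarith)]; ring
  constructor
  · have h1 : (β + s * Δ) - β = s * Δ := by ring
    rw [h1, cos_sgn_mul _ _ hs]
  · intro θ hθ
    set a := angNorm (θ - φ) with hadef
    obtain ⟨k, hk⟩ := angNorm_eq (θ - φ)
    rw [← hadef] at hk
    have ha_mem := angNorm_mem (θ - φ)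
    rw [← hadef] at ha_mem
    have hcos_a : Real.cos (θ - φ) = Real.cos a := (cos_angNorm (θ - φ)).symm
    -- rewrite the RHS
    have key : (β + s * Δ) - φ = s * (Δ - s * ψ) + (m : ℤ) * (2 * π) := by
      linear_combination hm + ψ * hs2
    have hRHS : Real.cos ((β + s * Δ) - φ) = Real.cos (Δ - s * ψ) := by
      rw [key, Real.cos_add_int_mul_two_pi, cos_sgn_mul _ _ hs]
    rw [hRHS, hcos_a]
    have haπ : |a| ≤ π := abs_le.mpr ⟨ha_mem.1, le_of_lt ha_mem.2⟩
    have hge : Δ - s * ψ ≤ |a| := by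
      by_contra hlt
      push_neg at hlt
      have habs_sum : |a + ψ| < Δ := by
        calc |a + ψ| ≤ |a| + |ψ| := abs_add_le _ _
          _ < Δ := by rw [habsψ]; linarith
      have hcos_sum : Real.cos (a + ψ) = Real.cos (θ - β) := by
        have heq : a + ψ = (θ - β) + ((k + m : ℤ) : ℝ) * (2 * π) := by
          rw [hk, hm]; push_cast; ring
        rw [heq, Real.cos_add_int_mul_two_pi]
      have : Real.cos Δ < Real.cos |a + ψ| :=
        Real.cos_lt_cos_of_nonneg_of_le_pi (abs_nonneg _) (by linarith) habs_sum
      rw [Real.cos_abs, hcos_sum] at this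
      linarith
    calc Real.cos a = Real.cos |a| := (Real.cos_abs a).symm
      _ ≤ Real.cos (Δ - s * ψ) :=
        Real.cos_le_cos_of_nonneg_of_le_pi (by linarith) haπ hge
end

section
/- Let v, θ, β ∈ ℝ, let p : ℝ → ℝ² be differentiable at t₀ with derivative p'(t₀) = v·(cos θ, sin θ), let T ∈ ℝ² with T ≠ p(t₀), and let φ ∈ ℝ satisfy (T − p(t₀))/‖T − p(t₀)‖ = (cos φ, sin φ). Then the function f(t) := ⟨(cos β, sin β), (T − p(t))/‖T − p(t)‖⟩ is differentiable at t₀ with f'(t₀) = v·sin(β − φ)·sin(φ − θ) / ‖T − p(t₀)‖. -/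
open Real

/-- main computation of Corollary 2: derivative of
`t ↦ ⟨(cos β, sin β), (T − p t)/‖T − p t‖⟩`. -/
theorem deriv_cos_bearing_minus_cruising
    (v θ β : ℝ) (p : ℝ → EuclideanSpace ℝ (Fin 2)) (t₀ : ℝ)
    (hp : HasDerivAt p (v • vec2 (cos θ) (sin θ)) t₀)
    (T : EuclideanSpace ℝ (Fin 2)) (hT : T ≠ p t₀)
    (φ : ℝ) (hφ : (‖T - p t₀‖)⁻¹ • (T - p t₀) = vec2 (cos φ) (sin φ)) :
    HasDerivAt
      (fun t => (inner ℝ (vec2 (cos β) (sin β)) ((‖T - p t‖)⁻¹ • (T - p t)) : ℝ))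
      (v * sin (β - φ) * sin (φ - θ) / ‖T - p t₀‖) t₀ := by
  set r : ℝ := ‖T - p t₀‖ with hr_def
  have hr : 0 < r := by
    rw [hr_def, norm_pos_iff, sub_ne_zero]; exact hT
  have h0 : HasDerivAt (fun t => T 0 - p t 0) (-(v * cos θ)) t₀ := by
    have := (EuclideanSpace.proj (0 : Fin 2)).hasFDerivAt.comp_hasDerivAt t₀ hp
    simpa [vec2] using (this.const_sub (T 0))
  have h1 : HasDerivAt (fun t => T 1 - p t 1) (-(v * sin θ)) t₀ := by
    have := (EuclideanSpace.proj (1 : Fin 2)).hasFDerivAt.comp_hasDerivAt t₀ hp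
    simpa [vec2] using (this.const_sub (T 1))
  -- component values at t₀
  have hc0 : T 0 - p t₀ 0 = r * cos φ := by
    have := congrArg (fun x => x 0) hφ
    simp only [vec2, PiLp.smul_apply, PiLp.sub_apply, smul_eq_mul, PiLp.toLp_apply, Matrix.cons_val_zero, Matrix.cons_val_one, Matrix.cons_val_fin_one] at this
    field_simp [hr.ne'] at this
    linarith [this]
  have hc1 : T 1 - p t₀ 1 = r * sin φ := by
    have := congrArg (fun x => x 1) hφ
    simp only [vec2, PiLp.smul_apply, PiLp.sub_apply, smul_eq_mul, PiLp.toLp_apply, Matrix.cons_val_zero, Matrix.cons_val_one, Matrix.cons_val_fin_one] at this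
    field_simp [hr.ne'] at this
    linarith [this]
  -- rewrite the function as scalar expression
  have hfun : (fun t => (inner ℝ (vec2 (cos β) (sin β)) ((‖T - p t‖)⁻¹ • (T - p t)) : ℝ))
      = fun t => (Real.sqrt ((T 0 - p t 0)^2 + (T 1 - p t 1)^2))⁻¹ *
          (cos β * (T 0 - p t 0) + sin β * (T 1 - p t 1)) := by
    funext t
    have hnorm : ‖T - p t‖ = Real.sqrt ((T 0 - p t 0)^2 + (T 1 - p t 1)^2) := by
      rw [EuclideanSpace.norm_eq]
      simp [Fin.sum_univ_two, sq_abs]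
    rw [PiLp.inner_apply]
    simp [Fin.sum_univ_two, vec2, hnorm, PiLp.smul_apply, PiLp.sub_apply]
    ring
  rw [hfun]
  -- derivative of S = sum of squares
  have hS : HasDerivAt (fun t => (T 0 - p t 0)^2 + (T 1 - p t 1)^2)
      (2 * (T 0 - p t₀ 0) * (-(v * cos θ)) + 2 * (T 1 - p t₀ 1) * (-(v * sin θ))) t₀ := by
    exact ((h0.pow 2).add (h1.pow 2)).congr_deriv (by ring)
  have hSpos : 0 < (T 0 - p t₀ 0)^2 + (T 1 - p t₀ 1)^2 := by
    rw [hc0, hc1,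
      show (r * cos φ)^2 + (r * sin φ)^2 = r^2 from by
        linear_combination r^2 * sin_sq_add_cos_sq φ]
    positivity
  have hsqrt := hS.sqrt hSpos.ne'
  have hsval : Real.sqrt ((T 0 - p t₀ 0)^2 + (T 1 - p t₀ 1)^2) = r := by
    rw [hc0, hc1]
    rw [show (r * cos φ)^2 + (r * sin φ)^2 = r^2 by nlinarith [sin_sq_add_cos_sq φ]]
    exact Real.sqrt_sq hr.le
  have hinv := hsqrt.inv (by rw [hsval]; exact hr.ne')
  have hN : HasDerivAt (fun t => cos β * (T 0 - p t 0) + sin β * (T 1 - p t 1))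
      (cos β * (-(v * cos θ)) + sin β * (-(v * sin θ))) t₀ :=
    (h0.const_mul (cos β)).add (h1.const_mul (sin β))
  have := hinv.mul hN
  refine this.congr_deriv ?_
  symm
  simp only [Pi.inv_apply]
  rw [hsval, hc0, hc1]
  have hsc := sin_sq_add_cos_sq φ
  rw [sin_sub, sin_sub]
  field_simp
  linear_combination (-(v * (cos β * cos θ + sin β * sin θ))) * hsc
end

section
/- Let v > 0, Δ ∈ [0, π/2], s ∈ {−1, 1}, β ∈ ℝ, and θ := β + sΔ. Let p : ℝ → ℝ² be differentiable at t₀ with derivative p'(t₀) = v·(cos θ, sin θ), let T ∈ ℝ² with T ≠ p(t₀), and let φ ∈ ℝ satisfy (T − p(t₀))/‖T − p(t₀)‖ = (cos φ, sin φ) and s·∠(φ − β) ∈ [0, Δ). Then the function f(t) := ⟨(cos β, sin β), (T − p(t))/‖T − p(t)‖⟩ is differentiable at t₀ with f'(t₀) ≥ 0, and f'(t₀) = 0 if and only if ∠(φ − β) = 0. -/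
open Real

lemma angNorm_exists (a : ℝ) : ∃ k : ℤ, a = angNorm a + k * (2*π) := by
  refine ⟨⌊(a + π) / (2 * π)⌋, ?_⟩
  have hπ : (2:ℝ) * π ≠ 0 := by positivity
  unfold angNorm
  rw [Int.fract]
  field_simp
  ring

lemma key1 (Δ b : ℝ) (hΔ : Δ ≤ π/2) (h1 : 0 ≤ b) (h2 : b < Δ) :
    0 ≤ sin (Δ - b) * sin b ∧ (sin (Δ - b) * sin b = 0 ↔ b = 0) := by
  have hπ := pi_pos
  have hpos : 0 < sin (Δ - b) := sin_pos_of_pos_of_lt_pi (by linarith) (by linarith)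
  have hnn : 0 ≤ sin b := sin_nonneg_of_nonneg_of_le_pi h1 (by linarith)
  refine ⟨mul_nonneg hpos.le hnn, ?_⟩
  rw [mul_eq_zero, or_iff_right hpos.ne']
  exact sin_eq_zero_iff_of_lt_of_lt (by linarith) (by linarith)


/-- Corollary 2: in blocking mode with corrected heading `β + sΔ`,
the quantity `cos(β − φ)` is nondecreasing, with stationarity exactly when the cruising
angle coincides with the bearing angle. -/
theorem blocking_mode_cos_nondecreasing
    (v : ℝ) (hv : 0 < v) (Δ : ℝ) (hΔ : Δ ∈ Set.Icc 0 (π / 2))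
    (s : ℝ) (hs : s = -1 ∨ s = 1) (β : ℝ) (θ : ℝ) (hθ : θ = β + s * Δ)
    (p : ℝ → EuclideanSpace ℝ (Fin 2)) (t₀ : ℝ)
    (hp : HasDerivAt p (v • vec2 (cos θ) (sin θ)) t₀)
    (T : EuclideanSpace ℝ (Fin 2)) (hT : T ≠ p t₀)
    (φ : ℝ) (hφ : (‖T - p t₀‖)⁻¹ • (T - p t₀) = vec2 (cos φ) (sin φ))
    (hcone : s * angNorm (φ - β) ∈ Set.Ico 0 Δ) :
    ∃ d : ℝ,
      HasDerivAt
        (fun t => (inner ℝ (vec2 (cos β) (sin β)) ((‖T - p t‖)⁻¹ • (T - p t)) : ℝ)) d t₀ ∧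
      0 ≤ d ∧ (d = 0 ↔ angNorm (φ - β) = 0) := by
  set u := vec2 (cos β) (sin β) with hu
  set w' := -(v • vec2 (cos θ) (sin θ)) with hw'
  set r := ‖T - p t₀‖ with hrdef
  have hr : (0:ℝ) < r := by
    rw [hrdef, norm_pos_iff]; exact sub_ne_zero.mpr hT
  -- the derivative exists with the raw value
  have hderiv : HasDerivAt
      (fun t => (inner ℝ u ((‖T - p t‖)⁻¹ • (T - p t)) : ℝ))
      (((inner ℝ u w' : ℝ) * r
          - (inner ℝ u (T - p t₀) : ℝ) *
            (((inner ℝ (T - p t₀) w' : ℝ) + (inner ℝ w' (T - p t₀) : ℝ)) / (2 * r)))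
          / r ^ 2) t₀ := by
    have hw : HasDerivAt (fun t => T - p t) w' t₀ := by
      have := (hasDerivAt_const t₀ T).sub hp
      rwa [zero_sub] at this
    have hA : HasDerivAt (fun t => (inner ℝ u (T - p t) : ℝ)) (inner ℝ u w' : ℝ) t₀ := by
      have := (hasDerivAt_const t₀ u).inner ℝ hw
      simpa using this
    have hq : HasDerivAt (fun t => (inner ℝ (T - p t) (T - p t) : ℝ))
        ((inner ℝ (T - p t₀) w' : ℝ) + (inner ℝ w' (T - p t₀) : ℝ)) t₀ := hw.inner ℝ hw
    have hkey : ∀ t, ‖T - p t‖ = √((inner ℝ (T - p t) (T - p t) : ℝ)) := by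
      intro t
      rw [real_inner_self_eq_norm_sq, Real.sqrt_sq (norm_nonneg _)]
    have hq0 : (inner ℝ (T - p t₀) (T - p t₀) : ℝ) ≠ 0 := by
      rw [real_inner_self_eq_norm_sq]; positivity
    have hN : HasDerivAt (fun t => ‖T - p t‖)
        (((inner ℝ (T - p t₀) w' : ℝ) + (inner ℝ w' (T - p t₀) : ℝ)) / (2 * r)) t₀ := by
      have := hq.sqrt hq0
      rw [← hkey t₀] at this
      exact this.congr_of_eventuallyEq (by filter_upwards with t using hkey t)
    have hf := hA.div hN hr.ne'
    have heq : (fun t => (inner ℝ u ((‖T - p t‖)⁻¹ • (T - p t)) : ℝ))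
        = fun t => (inner ℝ u (T - p t) : ℝ) / ‖T - p t‖ := by
      funext t
      rw [real_inner_smul_right]
      ring
    rw [heq]
    exact hf
  -- compute the inner products
  have hTp : T - p t₀ = r • vec2 (cos φ) (sin φ) := by
    rw [← hφ, smul_smul, mul_inv_cancel₀ hr.ne', one_smul]
  have e1 : (inner ℝ u w' : ℝ) = -(v * (cos β * cos θ + sin β * sin θ)) := by
    rw [hw', hu, inner_neg_right, real_inner_smul_right, inner_vec2]
  have e2 : (inner ℝ u (T - p t₀) : ℝ) = r * (cos β * cos φ + sin β * sin φ) := by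
    rw [hTp, hu, real_inner_smul_right, inner_vec2]
  have e3 : (inner ℝ (T - p t₀) w' : ℝ) = -(r * v * (cos φ * cos θ + sin φ * sin θ)) := by
    rw [hTp, hw', inner_neg_right, real_inner_smul_right, real_inner_smul_left,
      inner_vec2]; ring_nf
  have e4 : (inner ℝ w' (T - p t₀) : ℝ) = -(r * v * (cos φ * cos θ + sin φ * sin θ)) := by
    rw [real_inner_comm, e3]
  rw [e1, e2, e3, e4] at hderiv
  -- the raw value equals the nice trig form
  have hval : ((-(v * (cos β * cos θ + sin β * sin θ))) * r
      - (r * (cos β * cos φ + sin β * sin φ)) *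
        ((-(r * v * (cos φ * cos θ + sin φ * sin θ))
          + -(r * v * (cos φ * cos θ + sin φ * sin θ))) / (2 * r))) / r ^ 2
      = v / r * (sin (θ - φ) * sin (φ - β)) := by
    have core : sin (θ - φ) * sin (φ - β)
        = (cos φ * cos θ + sin φ * sin θ) * (cos β * cos φ + sin β * sin φ)
          - (cos β * cos θ + sin β * sin θ) := by
      rw [sin_sub, sin_sub]
      linear_combination (-(cos β * cos θ + sin β * sin θ)) * sin_sq_add_cos_sq φ
    rw [core]
    field_simp
    ring
  rw [hval] at hderiv
  -- rewrite trig via angNorm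
  set α := angNorm (φ - β) with hα
  obtain ⟨k, hk⟩ := angNorm_exists (φ - β)
  have hsin1 : sin (φ - β) = sin α := by
    rw [hk, sin_add_int_mul_two_pi]
  have hsin2 : sin (θ - φ) = sin (s * Δ - α) := by
    have h5 : θ - φ = s * Δ - α + ((-k : ℤ) : ℝ) * (2 * π) := by
      rw [hθ]; push_cast; linarith [hk]
    rw [h5, sin_add_int_mul_two_pi]
  rw [hsin1, hsin2] at hderiv
  have hvr : 0 < v / r := div_pos hv hr
  have h1 := hcone.1
  have h2 := hcone.2
  have hfin : 0 ≤ v / r * (sin (s * Δ - α) * sin α) ∧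
      (v / r * (sin (s * Δ - α) * sin α) = 0 ↔ α = 0) := by
    rcases hs with rfl | rfl
    · have hb := key1 Δ (-α) hΔ.2 (by linarith) (by linarith)
      have he : sin ((-1) * Δ - α) * sin α = sin (Δ - (-α)) * sin (-α) := by
        rw [show (-1:ℝ) * Δ - α = -(Δ - -α) by ring, sin_neg, sin_neg]; ring
      rw [he]
      refine ⟨mul_nonneg hvr.le hb.1, ?_⟩
      rw [mul_eq_zero, or_iff_right hvr.ne', hb.2]
      constructor <;> intro h <;> linarith
    · have hb := key1 Δ α hΔ.2 (by linarith) (by linarith)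
      have he : sin (1 * Δ - α) * sin α = sin (Δ - α) * sin α := by norm_num
      rw [he]
      refine ⟨mul_nonneg hvr.le hb.1, ?_⟩
      rw [mul_eq_zero, or_iff_right hvr.ne', hb.2]
  exact ⟨_, hderiv, hfin.1, hfin.2⟩
end

section
/- Let Δ ∈ [0, π/2], s ∈ {−1, 1}, and β, φ ∈ ℝ with s·∠(φ − β) ∈ [0, Δ), and set θ := β + sΔ. Then sin(β − φ)·sin(φ − θ) ≥ 0, with equality if and only if ∠(φ − β) = 0. -/
open Real

/-- sign lemma for Corollary 2: in blocking mode,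
`sin(β − φ)·sin(φ − θ) ≥ 0`, with equality iff `∠(φ − β) = 0`. -/
theorem blocking_sign_lemma
    (Δ : ℝ) (hΔ : Δ ∈ Set.Icc 0 (π / 2)) (s : ℝ) (hs : s = -1 ∨ s = 1)
    (β φ : ℝ) (hφ : s * angNorm (φ - β) ∈ Set.Ico 0 Δ) (θ : ℝ) (hθ : θ = β + s * Δ) :
    0 ≤ sin (β - φ) * sin (φ - θ) ∧
      (sin (β - φ) * sin (φ - θ) = 0 ↔ angNorm (φ - β) = 0) := by
  have hπ := Real.pi_pos
  obtain ⟨hΔ0, hΔπ⟩ := hΔ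
  set n : ℤ := ⌊((φ - β) + π) / (2 * π)⌋ with hn
  have hx : angNorm (φ - β) = (φ - β) - n * (2 * π) := by
    have h2π : (2 : ℝ) * π ≠ 0 := by positivity
    unfold angNorm
    rw [Int.fract, ← hn]
    field_simp [angNorm, Int.fract, hn]
    ring
  set x := angNorm (φ - β) with hxdef
  have h1 : sin (β - φ) = -sin x := by
    rw [hx]
    rw [Real.sin_sub_int_mul_two_pi]
    rw [show β - φ = -(φ - β) by ring, Real.sin_neg]
  have h2 : sin (φ - θ) = sin (x - s * Δ) := by
    rw [hx, hθ]
    rw [show (φ - β) - n * (2 * π) - s * Δ = (φ - (β + s * Δ)) - n * (2 * π) by ring,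
      Real.sin_sub_int_mul_two_pi]
  rw [h1, h2]
  obtain ⟨hφ0, hφΔ⟩ := hφ
  rcases hs with rfl | rfl
  · -- s = -1 : x ∈ (-Δ, 0]
    have hx0 : x ≤ 0 := by nlinarith
    have hxΔ : -Δ < x := by nlinarith
    have hsum : 0 < x + Δ := by linarith
    have hsumπ : x + Δ < π := by linarith
    have hsin2 : 0 < sin (x - (-1) * Δ) := by
      rw [show x - (-1) * Δ = x + Δ by ring]
      exact Real.sin_pos_of_pos_of_lt_pi hsum hsumπ
    have hsin1 : sin x ≤ 0 := by
      apply Real.sin_nonpos_of_nonpos_of_neg_pi_le hx0 (by linarith)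
    constructor
    · nlinarith
    · constructor
      · intro h
        rcases mul_eq_zero.1 h with h | h
        · have : sin x = 0 := by linarith [neg_eq_zero.1 h]
          have := (Real.sin_eq_zero_iff_of_lt_of_lt (by linarith) (by linarith)).1 this
          exact this
        · exact absurd h (ne_of_gt hsin2)
      · intro h; rw [h]; simp
  · -- s = 1 : x ∈ [0, Δ)
    have hx0 : 0 ≤ x := by nlinarith
    have hxΔ : x < Δ := by nlinarith
    have hdiff : x - 1 * Δ < 0 := by linarith
    have hdiffπ : -π < x - 1 * Δ := by linarith
    have hsin2 : sin (x - 1 * Δ) < 0 := Real.sin_neg_of_neg_of_neg_pi_lt hdiff hdiffπ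
    have hsin1 : 0 ≤ sin x := Real.sin_nonneg_of_nonneg_of_le_pi hx0 (by linarith)
    constructor
    · nlinarith
    · constructor
      · intro h
        rcases mul_eq_zero.1 h with h | h
        · have : sin x = 0 := by linarith [neg_eq_zero.1 h]
          exact (Real.sin_eq_zero_iff_of_lt_of_lt (by linarith) (by linarith)).1 this
        · exact absurd h (ne_of_lt hsin2)
      · intro h; rw [h]; simp
end
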